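/- Let B > 1 and φ ∈ (−1, 1), and define g(x) = (1/(2(φ+x)))·(−(B−1)(1+φx) + √((B−1)²(1+φx)² + 4B(φ+x)²)) for x ≠ −φ. Then g is differentiable at x = 1 with g'(1) = ((1−φ)/(1+φ))·(B−1)/(B+1), and differentiable at x = −1 with g'(−1) = ((1+φ)/(1−φ))·(B−1)/(B+1). -/

import Mathlib

private lemma aux_deriv (B φ x s : ℝ) (hx : 2 * (φ + x) ≠ 0)
    (hs : Real.sqrt ((B - 1) ^ 2 * (1 + φ * x) ^ 2 + 4 * B * (φ + x) ^ 2) = s)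
    (hs0 : s ≠ 0) :
    HasDerivAt (fun z => (1 / (2 * (φ + z))) *
      (-(B - 1) * (1 + φ * z) +
        Real.sqrt ((B - 1) ^ 2 * (1 + φ * z) ^ 2 + 4 * B * (φ + z) ^ 2)))
      ((0 * (2 * (φ + x)) - 1 * 2) / (2 * (φ + x)) ^ 2 *
        (-(B - 1) * (1 + φ * x) + s) +
       (1 / (2 * (φ + x))) *
        (-(B - 1) * φ +
          ((B - 1) ^ 2 * (2 * φ * (1 + φ * x)) + 4 * B * (2 * (φ + x))) / (2 * s))) x := by
  have hlin : HasDerivAt (fun z : ℝ => 1 + φ * z) φ x := by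
    simpa using ((hasDerivAt_id x).const_mul φ).const_add 1
  have hlin2 : HasDerivAt (fun z : ℝ => φ + z) 1 x := by
    simpa using (hasDerivAt_id x).const_add φ
  have hA : HasDerivAt (fun z : ℝ => 1 / (2 * (φ + z)))
      ((0 * (2 * (φ + x)) - 1 * 2) / (2 * (φ + x)) ^ 2) x := by
    exact (hasDerivAt_const x 1).div (by simpa using hlin2.const_mul 2) hx
  have hu : HasDerivAt (fun z : ℝ => (B - 1) ^ 2 * (1 + φ * z) ^ 2 + 4 * B * (φ + z) ^ 2)
      ((B - 1) ^ 2 * (2 * φ * (1 + φ * x)) + 4 * B * (2 * (φ + x))) x := by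
    have h1 : HasDerivAt (fun z : ℝ => (1 + φ * z) ^ 2) (2 * φ * (1 + φ * x)) x := by
      have := hlin.fun_pow 2
      simpa [mul_comm, mul_assoc, mul_left_comm] using this
    have h2 : HasDerivAt (fun z : ℝ => (φ + z) ^ 2) (2 * (φ + x)) x := by
      have := hlin2.fun_pow 2
      simpa [mul_comm] using this
    exact (h1.const_mul ((B - 1) ^ 2)).add (h2.const_mul (4 * B))
  have hu0 : (B - 1) ^ 2 * (1 + φ * x) ^ 2 + 4 * B * (φ + x) ^ 2 ≠ 0 := by
    intro h
    apply hs0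
    rw [← hs, h, Real.sqrt_zero]
  have hsq : HasDerivAt (fun z : ℝ =>
      Real.sqrt ((B - 1) ^ 2 * (1 + φ * z) ^ 2 + 4 * B * (φ + z) ^ 2))
      (((B - 1) ^ 2 * (2 * φ * (1 + φ * x)) + 4 * B * (2 * (φ + x))) / (2 * s)) x := by
    have := hu.sqrt hu0
    rwa [hs] at this
  have hS : HasDerivAt (fun z : ℝ =>
      -(B - 1) * (1 + φ * z) +
        Real.sqrt ((B - 1) ^ 2 * (1 + φ * z) ^ 2 + 4 * B * (φ + z) ^ 2))
      (-(B - 1) * φ +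
        ((B - 1) ^ 2 * (2 * φ * (1 + φ * x)) + 4 * B * (2 * (φ + x))) / (2 * s)) x := by
    exact (hlin.const_mul (-(B - 1))).add hsq
  have := hA.fun_mul hS
  convert this using 1
  case e'_4 => rfl
  case e'_5 => rfl
  rw [hs]

/-- The spatial iteration map g is differentiable at the fixed
points ±1, with g'(1) = ((1−φ)/(1+φ))·(B−1)/(B+1) and
g'(−1) = ((1+φ)/(1−φ))·(B−1)/(B+1). -/
theorem iteration_map_deriv_at_fixed_points (B φ : ℝ) (hB : 1 < B)
    (hφ : φ ∈ Set.Ioo (-1 : ℝ) 1)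
    (g : ℝ → ℝ)
    (hg : ∀ z : ℝ, g z = (1 / (2 * (φ + z))) *
      (-(B - 1) * (1 + φ * z) +
        Real.sqrt ((B - 1) ^ 2 * (1 + φ * z) ^ 2 + 4 * B * (φ + z) ^ 2))) :
    HasDerivAt g ((1 - φ) / (1 + φ) * ((B - 1) / (B + 1))) 1 ∧
    HasDerivAt g ((1 + φ) / (1 - φ) * ((B - 1) / (B + 1))) (-1) := by
  obtain ⟨hφ1, hφ2⟩ := hφ
  have hgfun : g = fun z => (1 / (2 * (φ + z))) *
      (-(B - 1) * (1 + φ * z) +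
        Real.sqrt ((B - 1) ^ 2 * (1 + φ * z) ^ 2 + 4 * B * (φ + z) ^ 2)) := funext hg
  subst hgfun
  have hB1 : (0:ℝ) < B + 1 := by linarith
  have hp : (0:ℝ) < 1 + φ := by linarith
  have hm : (0:ℝ) < 1 - φ := by linarith
  constructor
  · have hs : Real.sqrt ((B - 1) ^ 2 * (1 + φ * 1) ^ 2 + 4 * B * (φ + 1) ^ 2)
        = (1 + φ) * (B + 1) := by
      rw [show (B - 1) ^ 2 * (1 + φ * 1) ^ 2 + 4 * B * (φ + 1) ^ 2
          = ((1 + φ) * (B + 1)) ^ 2 by ring]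
      exact Real.sqrt_sq (by positivity)
    have hs0 : (1 + φ) * (B + 1) ≠ 0 := by positivity
    have hx : 2 * (φ + 1) ≠ 0 := by
      have : (0:ℝ) < φ + 1 := by linarith
      positivity
    have h := aux_deriv B φ 1 ((1 + φ) * (B + 1)) hx hs hs0
    convert h using 1
    have hne : φ + 1 ≠ 0 := by linarith
    field_simp
    ring
  · have hs : Real.sqrt ((B - 1) ^ 2 * (1 + φ * (-1)) ^ 2 + 4 * B * (φ + (-1)) ^ 2)
        = (1 - φ) * (B + 1) := by
      rw [show (B - 1) ^ 2 * (1 + φ * (-1)) ^ 2 + 4 * B * (φ + (-1)) ^ 2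
          = ((1 - φ) * (B + 1)) ^ 2 by ring]
      exact Real.sqrt_sq (by positivity)
    have hs0 : (1 - φ) * (B + 1) ≠ 0 := by positivity
    have hx : 2 * (φ + (-1)) ≠ 0 := by
      intro h
      have : φ = 1 := by linarith
      linarith
    have h := aux_deriv B φ (-1) ((1 - φ) * (B + 1)) hx hs hs0
    convert h using 1
    have hne : φ + (-1) ≠ 0 := fun h => by simp at hx; exact hx (by linarith)
    field_simp
    ring
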